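/- Gegenbauer solution of the even singular-vector system (existence part of Theorem 3.3/EvenFromPtoP): let n ∈ ℕ with n ≥ 2, let N ∈ ℕ, let p ∈ ℕ with p ≤ n−1, and let λ ∈ ℂ. Define polynomials P, Q, R ∈ ℂ[t] by P(t) := (λ+p−2N)·Σ_{j=0}^{N} a_j^{(N)}(λ) t^j, Q(t) := −2N·(2λ+n−2N−1)·Σ_{j=0}^{N−1} b_j^{(N−1)}(λ−1) t^j, and R(t) := 2N·Σ_{j=0}^{N−1} a_j^{(N−1)}(λ−1) t^j (Q := 0 and R := 0 if N = 0). Then, with ' denoting the formal polynomial derivative, the following six identities hold in ℂ[t]: (1) 2t(t+1)P'' + (3−4N)tP' + (2λ+n−4N+1)P' + N(2N−1)P = 0; (2) 2P' + (2N−1)Q − 2tQ' + 2tR' + (λ+n−p−2N+1)R = 0; (3) −2P' + (λ+p−2N)R = 0; (4) 2tP' − 2N·P + (λ+p−2N)Q = 0; (5) 2t(t+1)Q'' + (5−4N)tQ' + (2λ+n−4N+3)Q' + (N−1)(2N−1)Q + 2tR' − (2N−2)R = 0; (6) 2t(t+1)R'' + (7−4N)tR' + (2λ+n−4N+3)R'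 + (N−1)(2N−3)R = 0. -/

import Mathlib

open Finset Polynomial

noncomputable def aC (n N j : ℕ) (l : ℂ) : ℂ :=
  (-2 : ℂ) ^ (N - j) *
    ((N.factorial : ℂ) / ((j.factorial : ℂ) * ((2 * N - 2 * j).factorial : ℂ))) *
    ∏ k ∈ Finset.Ico j N, (2 * l - 4 * (N : ℂ) + 2 * (k : ℂ) + (n : ℂ) + 1)

noncomputable def bC (n N j : ℕ) (l : ℂ) : ℂ :=
  (-2 : ℂ) ^ (N - j) *
    ((N.factorial : ℂ) / ((j.factorial : ℂ) * ((2 * N - 2 * j + 1).factorial : ℂ))) *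
    ∏ k ∈ Finset.Ico j N, (2 * l - 4 * (N : ℂ) + 2 * (k : ℂ) + (n : ℂ) - 1)

noncomputable def bCZ (n M : ℕ) (j : ℤ) (l : ℂ) : ℂ :=
  if 0 ≤ j ∧ j ≤ (M : ℤ) then bC n M j.toNat l else 0

noncomputable def alphaC (n N i : ℕ) (l : ℂ) : ℂ :=
  (-1 : ℂ) ^ i * 2 ^ N * ((N.factorial : ℂ) / ((2 * N).factorial : ℂ)) * (N.choose i : ℂ) *
    (∏ k ∈ Finset.Icc (i + 1) N, (2 * l + (n : ℂ) - 2 * (k : ℂ))) *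
    ∏ k ∈ Finset.Icc 1 i, (2 * l + (n : ℂ) - 2 * (k : ℂ) - 2 * (N : ℂ) + 1)

noncomputable def betaC (n N i : ℕ) (l : ℂ) : ℂ :=
  (-1 : ℂ) ^ i * 2 ^ N * ((N.factorial : ℂ) / ((2 * N + 1).factorial : ℂ)) * (N.choose i : ℂ) *
    (∏ k ∈ Finset.Icc (i + 1) N, (2 * l + (n : ℂ) - 2 * (k : ℂ))) *
    ∏ k ∈ Finset.Icc 1 i, (2 * l + (n : ℂ) - 2 * (k : ℂ) - 2 * (N : ℂ) - 1)

noncomputable def gammaC (n N i : ℕ) (l p : ℂ) : ℂ :=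
  (-1 : ℂ) ^ i * 2 ^ N *
    ((N.factorial : ℂ) / (((N : ℂ) + 1) * ((2 * N + 1).factorial : ℂ))) *
    ((N + 1).choose i : ℂ) *
    ((l + p - 2 * (N : ℂ) - 1) * ((N : ℂ) + 1) * (2 * l + (n : ℂ) - 2 * (i : ℂ)) +
      (l + (n : ℂ) - p) * (2 * (N : ℂ) + 1) * ((N : ℂ) - (i : ℂ) + 1)) *
    (∏ k ∈ Finset.Icc (i + 1) N, (2 * l + (n : ℂ) - 2 * (k : ℂ))) *
    ∏ k ∈ Finset.Icc 1 (i - 1), (2 * l + (n : ℂ) - 2 * (k : ℂ) - 2 * (N : ℂ) - 1)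

noncomputable def poch (a : ℂ) (l : ℕ) : ℂ :=
  ∏ m ∈ Finset.range l, (a + (m : ℂ))

lemma prodA (c : ℂ) (e : ℕ) :
    ∏ i ∈ range (e+1), (c + 2*(i:ℂ)) = c * ∏ i ∈ range e, (c + 2*(i:ℂ) + 2) := by
  rw [Finset.prod_range_succ']
  rw [Finset.prod_congr rfl (fun i _ => by push_cast; ring :
    ∀ i ∈ range e, (c + 2*((i+1 : ℕ):ℂ)) = c + 2*(i:ℂ) + 2)]
  push_cast; ring

lemma prodB (c : ℂ) (e : ℕ) :
    ∏ i ∈ range (e+1), (c + 2*(i:ℂ)) = (∏ i ∈ range e, (c + 2*(i:ℂ))) * (c + 2*(e:ℂ)) := by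
  rw [Finset.prod_range_succ]

lemma L2 (n M j : ℕ) (hj : j ≤ M) (l : ℂ) :
    (2*l + (n:ℂ) - 4*(M:ℂ) + 2*(j:ℂ) - 1) * aC n M j l
      = (2*(M:ℂ) - 2*(j:ℂ) + 1) * (2*l + (n:ℂ) - 2*(M:ℂ) - 1) * bC n M j l := by
  obtain ⟨e, rfl⟩ : ∃ e, M = j+e := ⟨M - j, by omega⟩
  simp only [aC, bC]
  rw [show j+e - j = e by omega, show 2*(j+e) - 2*j = 2*e by omega]
  rw [Finset.prod_Ico_eq_prod_range, Finset.prod_Ico_eq_prod_range,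
    show j+e - j = e by omega]
  set c : ℂ := 2*l - 4*((j+e : ℕ):ℂ) + 2*(j:ℂ) + (n:ℂ) - 1 with hc
  rw [Finset.prod_congr rfl (fun i _ => by rw [hc]; push_cast; ring :
    ∀ i ∈ range e, (2*l - 4*((j+e : ℕ):ℂ) + 2*((j+i : ℕ):ℂ) + (n:ℂ) + 1) = c + 2*(i:ℂ) + 2)]
  rw [Finset.prod_congr rfl (fun i _ => by rw [hc]; push_cast; ring :
    ∀ i ∈ range e, (2*l - 4*((j+e : ℕ):ℂ) + 2*((j+i : ℕ):ℂ) + (n:ℂ) - 1) = c + 2*(i:ℂ))]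
  have hkey : c * ∏ i ∈ range e, (c + 2*(i:ℂ) + 2)
      = (∏ i ∈ range e, (c + 2*(i:ℂ))) * (c + 2*(e:ℂ)) := by
    rw [← prodA, prodB]
  rw [show (2*l + (n:ℂ) - 4*((j+e : ℕ):ℂ) + 2*(j:ℂ) - 1) = c from by rw [hc]; push_cast; ring,
    show (2*l + (n:ℂ) - 2*((j+e : ℕ):ℂ) - 1) = c + 2*(e:ℂ) from by rw [hc]; push_cast; ring]
  rw [Nat.factorial_succ (2*e)]
  have h1 : ((j.factorial : ℂ)) ≠ 0 := Nat.cast_ne_zero.mpr (Nat.factorial_ne_zero j)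
  have h2 : (((2*e).factorial : ℂ)) ≠ 0 := Nat.cast_ne_zero.mpr (Nat.factorial_ne_zero _)
  have h4 : (2*(e:ℂ)+1) ≠ 0 := by
    have := Nat.cast_add_one_ne_zero (R := ℂ) (2*e); push_cast at this; exact this
  push_cast
  field_simp [h1, h2, h4]
  linear_combination ((2*(e:ℂ)+1) * (((j+e).factorial : ℂ))) * hkey

lemma Lodd (n M j : ℕ) (hj : j < M) (l : ℂ) :
    ((j:ℂ)+1) * (2*l + (n:ℂ) - 4*(M:ℂ) + 2*(j:ℂ) - 1) * bC n M (j+1) l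
      + (2*(M:ℂ) - 2*(j:ℂ) + 1) * ((M:ℂ) - (j:ℂ)) * bC n M j l = 0 := by
  obtain ⟨e, rfl⟩ : ∃ e, M = j+1+e := ⟨M - (j+1), by omega⟩
  simp only [bC]
  rw [show j+1+e - (j+1) = e by omega, show j+1+e - j = e+1 by omega,
    show 2*(j+1+e) - 2*(j+1) + 1 = 2*e+1 by omega,
    show 2*(j+1+e) - 2*j + 1 = 2*e+1+1+1 by omega]
  rw [Finset.prod_Ico_eq_prod_range, Finset.prod_Ico_eq_prod_range,
    show j+1+e - (j+1) = e by omega, show j+1+e - j = e+1 by omega]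
  set c : ℂ := 2*l - 4*((j+1+e : ℕ):ℂ) + 2*(j:ℂ) + (n:ℂ) - 1 with hc
  rw [Finset.prod_congr rfl (fun i _ => by rw [hc]; push_cast; ring :
    ∀ i ∈ range e, (2*l - 4*((j+1+e : ℕ):ℂ) + 2*((j+1+i : ℕ):ℂ) + (n:ℂ) - 1) = c + 2*(i:ℂ) + 2)]
  rw [Finset.prod_congr rfl (fun i _ => by rw [hc]; push_cast; ring :
    ∀ i ∈ range (e+1), (2*l - 4*((j+1+e : ℕ):ℂ) + 2*((j+i : ℕ):ℂ) + (n:ℂ) - 1) = c + 2*(i:ℂ))]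
  rw [prodA]
  rw [Nat.factorial_succ (2*e+1+1), Nat.factorial_succ (2*e+1), Nat.factorial_succ (2*e),
    Nat.factorial_succ j]
  have h1 : ((j.factorial : ℂ)) ≠ 0 := Nat.cast_ne_zero.mpr (Nat.factorial_ne_zero j)
  have h2 : (((2*e).factorial : ℂ)) ≠ 0 := Nat.cast_ne_zero.mpr (Nat.factorial_ne_zero _)
  have h3 : ((j:ℂ)+1) ≠ 0 := Nat.cast_add_one_ne_zero j
  have h4 : (2*(e:ℂ)+1) ≠ 0 := by
    have := Nat.cast_add_one_ne_zero (R := ℂ) (2*e); push_cast at this; exact this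
  have h5 : (2*(e:ℂ)+1+1) ≠ 0 := by
    have := Nat.cast_add_one_ne_zero (R := ℂ) (2*e+1); push_cast at this
    intro h; exact this (by linear_combination h)
  have h6 : (2*(e:ℂ)+1+1+1) ≠ 0 := by
    have := Nat.cast_add_one_ne_zero (R := ℂ) (2*e+2); push_cast at this
    intro h; exact this (by linear_combination h)
  have h2x : (((e*2).factorial : ℂ)) ≠ 0 := Nat.cast_ne_zero.mpr (Nat.factorial_ne_zero _)
  have h4x : (1 + (e:ℂ)*2) ≠ 0 := by intro h; exact h4 (by linear_combination h)
  have h5x : (2 + (e:ℂ)*2) ≠ 0 := by intro h; exact h5 (by linear_combination h)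
  have h6x : (3 + (e:ℂ)*2) ≠ 0 := by intro h; exact h6 (by linear_combination h)
  rw [show c = 2*l + (n:ℂ) - 4*((j:ℂ)+1+(e:ℂ)) + 2*(j:ℂ) - 1 from by rw [hc]; push_cast; ring]
  push_cast
  rw [add_eq_zero_iff_eq_neg]
  field_simp [h1, h2, h2x, h3, h4, h5, h6, h4x, h5x, h6x]
  ring

lemma L3 (n M j : ℕ) (hj : j ≤ M) (l : ℂ) :
    ((j:ℂ)+1) * aC n (M+1) (j+1) l = ((M:ℂ)+1) * aC n M j (l-1) := by
  obtain ⟨e, rfl⟩ : ∃ e, M = j+e := ⟨M - j, by omega⟩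
  simp only [aC]
  rw [show j+e+1 - (j+1) = e by omega, show j+e - j = e by omega,
    show 2*(j+e+1) - 2*(j+1) = 2*e by omega, show 2*(j+e) - 2*j = 2*e by omega]
  rw [Finset.prod_Ico_eq_prod_range, Finset.prod_Ico_eq_prod_range,
    show j+e+1 - (j+1) = e by omega, show j+e - j = e by omega]
  set c : ℂ := 2*l + (n:ℂ) - 2*(j:ℂ) - 4*(e:ℂ) - 1 with hc
  rw [Finset.prod_congr rfl (fun i _ => by rw [hc]; push_cast; ring :
    ∀ i ∈ range e, (2*l - 4*((j+e+1 : ℕ):ℂ) + 2*((j+1+i : ℕ):ℂ) + (n:ℂ) + 1) = c + 2*(i:ℂ))]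
  rw [Finset.prod_congr rfl (fun i _ => by rw [hc]; push_cast; ring :
    ∀ i ∈ range e, (2*(l-1) - 4*((j+e : ℕ):ℂ) + 2*((j+i : ℕ):ℂ) + (n:ℂ) + 1) = c + 2*(i:ℂ))]
  rw [Nat.factorial_succ (j+e), Nat.factorial_succ j]
  have h1 : ((j.factorial : ℂ)) ≠ 0 := Nat.cast_ne_zero.mpr (Nat.factorial_ne_zero j)
  have h2 : (((2*e).factorial : ℂ)) ≠ 0 := Nat.cast_ne_zero.mpr (Nat.factorial_ne_zero _)
  have h3 : ((j:ℂ)+1) ≠ 0 := Nat.cast_add_one_ne_zero j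
  push_cast
  field_simp [h1, h2, h3]

lemma L4 (n M j : ℕ) (hj : j ≤ M) (l : ℂ) :
    ((j:ℂ) - ((M:ℂ)+1)) * aC n (M+1) j l
      = ((M:ℂ)+1) * (2*l + (n:ℂ) - 2*(M:ℂ) - 3) * bC n M j (l-1) := by
  obtain ⟨e, rfl⟩ : ∃ e, M = j+e := ⟨M - j, by omega⟩
  simp only [aC, bC]
  rw [show j+e+1 - j = e+1 by omega, show j+e - j = e by omega,
    show 2*(j+e+1) - 2*j = 2*e+1+1 by omega, show 2*(j+e) - 2*j + 1 = 2*e+1 by omega]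
  rw [Finset.prod_Ico_eq_prod_range, Finset.prod_Ico_eq_prod_range,
    show j+e+1 - j = e+1 by omega, show j+e - j = e by omega]
  set c : ℂ := 2*l + (n:ℂ) - 2*(j:ℂ) - 4*(e:ℂ) - 3 with hc
  rw [Finset.prod_congr rfl (fun i _ => by rw [hc]; push_cast; ring :
    ∀ i ∈ range (e+1), (2*l - 4*((j+e+1 : ℕ):ℂ) + 2*((j+i : ℕ):ℂ) + (n:ℂ) + 1) = c + 2*(i:ℂ))]
  rw [Finset.prod_congr rfl (fun i _ => by rw [hc]; push_cast; ring :
    ∀ i ∈ range e, (2*(l-1) - 4*((j+e : ℕ):ℂ) + 2*((j+i : ℕ):ℂ) + (n:ℂ) - 1) = c + 2*(i:ℂ))]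
  rw [prodB]
  rw [show (2*l + (n:ℂ) - 2*((j+e:ℕ):ℂ) - 3) = c + 2*(e:ℂ) from by rw [hc]; push_cast; ring]
  rw [Nat.factorial_succ (j+e), Nat.factorial_succ (2*e+1), Nat.factorial_succ (2*e)]
  have h1 : ((j.factorial : ℂ)) ≠ 0 := Nat.cast_ne_zero.mpr (Nat.factorial_ne_zero j)
  have h2 : (((2*e).factorial : ℂ)) ≠ 0 := Nat.cast_ne_zero.mpr (Nat.factorial_ne_zero _)
  have h4 : (2*(e:ℂ)+1) ≠ 0 := by
    have := Nat.cast_add_one_ne_zero (R := ℂ) (2*e); push_cast at this; exact this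
  have h5 : (2*(e:ℂ)+1+1) ≠ 0 := by
    have := Nat.cast_add_one_ne_zero (R := ℂ) (2*e+1); push_cast at this
    intro h; exact this (by linear_combination h)
  have h4' : ((e:ℂ)*2+1) ≠ 0 := by intro h; exact h4 (by linear_combination h)
  have h5' : ((e:ℂ)*2+1+1) ≠ 0 := by intro h; exact h5 (by linear_combination h)
  push_cast
  field_simp [h1, h2, h4, h5, h4', h5']
  ring

lemma L5 (n M j : ℕ) (hj : j < M) (l : ℂ) :
    ((j:ℂ)+1) * (2*l + (n:ℂ) - 2*(M:ℂ) - 1) * bC n M (j+1) l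
      + ((M:ℂ) - (j:ℂ)) * aC n M j l = 0 := by
  obtain ⟨e, rfl⟩ : ∃ e, M = j+1+e := ⟨M - (j+1), by omega⟩
  simp only [aC, bC]
  rw [show j+1+e - (j+1) = e by omega, show j+1+e - j = e+1 by omega,
    show 2*(j+1+e) - 2*(j+1) + 1 = 2*e+1 by omega,
    show 2*(j+1+e) - 2*j = 2*e+1+1 by omega]
  rw [Finset.prod_Ico_eq_prod_range, Finset.prod_Ico_eq_prod_range,
    show j+1+e - (j+1) = e by omega, show j+1+e - j = e+1 by omega]
  set c : ℂ := 2*l + (n:ℂ) - 2*(j:ℂ) - 4*(e:ℂ) - 3 with hc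
  rw [Finset.prod_congr rfl (fun i _ => by rw [hc]; push_cast; ring :
    ∀ i ∈ range e, (2*l - 4*((j+1+e : ℕ):ℂ) + 2*((j+1+i : ℕ):ℂ) + (n:ℂ) - 1) = c + 2*(i:ℂ))]
  rw [Finset.prod_congr rfl (fun i _ => by rw [hc]; push_cast; ring :
    ∀ i ∈ range (e+1), (2*l - 4*((j+1+e : ℕ):ℂ) + 2*((j+i : ℕ):ℂ) + (n:ℂ) + 1) = c + 2*(i:ℂ))]
  rw [prodB]
  rw [show (2*l + (n:ℂ) - 2*((j+1+e:ℕ):ℂ) - 1) = c + 2*(e:ℂ) from by rw [hc]; push_cast; ring]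
  rw [Nat.factorial_succ (2*e+1), Nat.factorial_succ (2*e), Nat.factorial_succ j]
  have h1 : ((j.factorial : ℂ)) ≠ 0 := Nat.cast_ne_zero.mpr (Nat.factorial_ne_zero j)
  have h2 : (((2*e).factorial : ℂ)) ≠ 0 := Nat.cast_ne_zero.mpr (Nat.factorial_ne_zero _)
  have h3 : ((j:ℂ)+1) ≠ 0 := Nat.cast_add_one_ne_zero j
  have h4 : (2*(e:ℂ)+1) ≠ 0 := by
    have := Nat.cast_add_one_ne_zero (R := ℂ) (2*e); push_cast at this; exact this
  have h5 : (2*(e:ℂ)+1+1) ≠ 0 := by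
    have := Nat.cast_add_one_ne_zero (R := ℂ) (2*e+1); push_cast at this
    intro h; exact this (by linear_combination h)
  push_cast
  field_simp [h1, h2, h3, h4, h5]
  ring

lemma Lev (n M j : ℕ) (hj : j < M) (l : ℂ) :
    ((j:ℂ)+1) * (2*l + (n:ℂ) - 4*(M:ℂ) + 2*(j:ℂ) + 1) * aC n M (j+1) l
      + (2*(M:ℂ) - 2*(j:ℂ) - 1) * ((M:ℂ) - (j:ℂ)) * aC n M j l = 0 := by
  obtain ⟨e, rfl⟩ : ∃ e, M = j+1+e := ⟨M - (j+1), by omega⟩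
  simp only [aC]
  rw [show j+1+e - (j+1) = e by omega, show j+1+e - j = e+1 by omega,
    show 2*(j+1+e) - 2*(j+1) = 2*e by omega, show 2*(j+1+e) - 2*j = 2*e+1+1 by omega]
  rw [Finset.prod_Ico_eq_prod_range, Finset.prod_Ico_eq_prod_range,
    show j+1+e - (j+1) = e by omega, show j+1+e - j = e+1 by omega]
  set c : ℂ := 2*l - 4*((j+1+e : ℕ):ℂ) + 2*(j:ℂ) + (n:ℂ) + 1 with hc
  rw [Finset.prod_congr rfl (fun i _ => by rw [hc]; push_cast; ring :
    ∀ i ∈ range e, (2*l - 4*((j+1+e : ℕ):ℂ) + 2*((j+1+i : ℕ):ℂ) + (n:ℂ) + 1) = c + 2*(i:ℂ) + 2)]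
  rw [Finset.prod_congr rfl (fun i _ => by rw [hc]; push_cast; ring :
    ∀ i ∈ range (e+1), (2*l - 4*((j+1+e : ℕ):ℂ) + 2*((j+i : ℕ):ℂ) + (n:ℂ) + 1) = c + 2*(i:ℂ))]
  rw [prodA]
  rw [Nat.factorial_succ (2*e+1), Nat.factorial_succ (2*e), Nat.factorial_succ j]
  have h1 : ((j.factorial : ℂ)) ≠ 0 := Nat.cast_ne_zero.mpr (Nat.factorial_ne_zero j)
  have h2 : (((2*e).factorial : ℂ)) ≠ 0 := Nat.cast_ne_zero.mpr (Nat.factorial_ne_zero _)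
  have h2' : (((e*2).factorial : ℂ)) ≠ 0 := Nat.cast_ne_zero.mpr (Nat.factorial_ne_zero _)
  have h3 : ((j:ℂ)+1) ≠ 0 := Nat.cast_add_one_ne_zero j
  have h4 : (2*(e:ℂ)+1) ≠ 0 := by
    have := Nat.cast_add_one_ne_zero (R := ℂ) (2*e); push_cast at this; exact this
  have h5 : (2*(e:ℂ)+2) ≠ 0 := by
    have := Nat.cast_add_one_ne_zero (R := ℂ) (2*e+1); push_cast at this
    intro h; exact this (by linear_combination h)
  have h3' : (1 + (j:ℂ)) ≠ 0 := by intro h; exact h3 (by linear_combination h)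
  have h4' : (1 + (e:ℂ)*2) ≠ 0 := by intro h; exact h4 (by linear_combination h)
  have h5' : (2 + (e:ℂ)*2) ≠ 0 := by intro h; exact h5 (by linear_combination h)
  have hc' : c = 2*l + (n:ℂ) - 4*((j:ℂ)+1+(e:ℂ)) + 2*(j:ℂ) + 1 := by rw [hc]; push_cast; ring
  rw [hc']
  push_cast
  have h5'' : (2*(e:ℂ)+1+1) ≠ 0 := by intro h; exact h5 (by linear_combination h)
  field_simp [h1, h2, h3, h4, h5'']
  ring

lemma coeff_cf (M : ℕ) (f : ℕ → ℂ) (hf : ∀ m, M ≤ m → f m = 0) (m : ℕ) :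
    (∑ j ∈ range M, C (f j) * X ^ j).coeff m = f m := by
  rw [Polynomial.finset_sum_coeff]
  simp only [Polynomial.coeff_C_mul, Polynomial.coeff_X_pow]
  rw [Finset.sum_eq_single m]
  · by_cases h : m < M
    · simp
    · simp [hf m (by omega)]
  · intro b _ hb; simp [Ne.symm hb]
  · intro h; simp at h; simp [hf m (by omega)]

lemma cXm (p : Polynomial ℂ) (m : ℕ) :
    (X * p).coeff m = if m = 0 then 0 else p.coeff (m - 1) := by
  rcases m with _ | m
  · simp
  · simp [Polynomial.coeff_X_mul]

lemma ode_of_rec (M : ℕ) (f : ℕ → ℂ) (α β γ : ℂ)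
    (hf : ∀ m, M ≤ m → f m = 0)
    (h : ∀ m : ℕ, ((m:ℂ)+1)*(2*(m:ℂ)+β) * f (m+1)
        + (2*(m:ℂ)^2+(α-2)*(m:ℂ)+γ) * f m = 0) :
    C 2 * X * (X+1) * derivative (derivative (∑ j ∈ range M, C (f j) * X ^ j))
      + C α * X * derivative (∑ j ∈ range M, C (f j) * X ^ j)
      + C β * derivative (∑ j ∈ range M, C (f j) * X ^ j)
      + C γ * (∑ j ∈ range M, C (f j) * X ^ j) = 0 := by
  set S := ∑ j ∈ range M, C (f j) * X ^ j with hS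
  have e1 : C 2 * X * (X+1) * derivative (derivative S)
      = C 2 * (X * (X * derivative (derivative S))) + C 2 * (X * derivative (derivative S)) := by
    ring
  have e2 : C α * X * derivative S = C α * (X * derivative S) := by ring
  rw [e1, e2]
  ext m
  simp only [Polynomial.coeff_add, Polynomial.coeff_C_mul, cXm, Polynomial.coeff_derivative,
    coeff_cf M f hf, Polynomial.coeff_zero, hS]
  rcases m with _ | m
  · simp only [if_pos rfl]
    have := h 0
    push_cast at this ⊢
    linear_combination this
  · rcases m with _ | m
    · simp only [if_neg (by omega : ¬ (1:ℕ) = 0), if_pos rfl]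
      have := h 1
      push_cast at this ⊢
      linear_combination this
    · simp only [if_neg (by omega : ¬ (m+1+1:ℕ) = 0), if_neg (by omega : ¬ (m+1:ℕ) = 0)]
      have := h (m+2)
      push_cast at this ⊢
      linear_combination this

lemma fo (Ma Mb : ℕ) (f g : ℕ → ℂ) (u₁ u₂ u₃ v₁ v₂ v₃ : ℂ)
    (hf : ∀ m, Ma ≤ m → f m = 0) (hg : ∀ m, Mb ≤ m → g m = 0)
    (h : ∀ m : ℕ, u₁*((m:ℂ)+1)*f (m+1) + (u₂*(m:ℂ) + u₃)*f m
        + v₁*((m:ℂ)+1)*g (m+1) + (v₂*(m:ℂ)+v₃)*g m = 0) :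
    C u₁ * derivative (∑ j ∈ range Ma, C (f j) * X ^ j)
      + C u₂ * (X * derivative (∑ j ∈ range Ma, C (f j) * X ^ j))
      + C u₃ * (∑ j ∈ range Ma, C (f j) * X ^ j)
      + C v₁ * derivative (∑ j ∈ range Mb, C (g j) * X ^ j)
      + C v₂ * (X * derivative (∑ j ∈ range Mb, C (g j) * X ^ j))
      + C v₃ * (∑ j ∈ range Mb, C (g j) * X ^ j) = 0 := by
  ext m
  simp only [Polynomial.coeff_add, Polynomial.coeff_C_mul, cXm, Polynomial.coeff_derivative,
    coeff_cf Ma f hf, coeff_cf Mb g hg, Polynomial.coeff_zero]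
  rcases m with _ | m
  · simp only [if_pos rfl]
    have := h 0
    push_cast at this ⊢
    linear_combination this
  · simp only [if_neg (by omega : ¬ (m+1:ℕ) = 0)]
    have := h (m+1)
    push_cast at this ⊢
    linear_combination this


noncomputable def fAe (n N : ℕ) (l : ℂ) : ℕ → ℂ := fun m => if m < N+1 then aC n N m l else 0
noncomputable def fBe (n N : ℕ) (l : ℂ) : ℕ → ℂ := fun m => if m < N+1 then bC n N m l else 0

lemma fAe_lt (n N : ℕ) (l : ℂ) (m : ℕ) (h : m < N+1) : fAe n N l m = aC n N m l := if_pos h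
lemma fAe_ge (n N : ℕ) (l : ℂ) (m : ℕ) (h : N+1 ≤ m) : fAe n N l m = 0 := if_neg (by omega)
lemma fBe_lt (n N : ℕ) (l : ℂ) (m : ℕ) (h : m < N+1) : fBe n N l m = bC n N m l := if_pos h
lemma fBe_ge (n N : ℕ) (l : ℂ) (m : ℕ) (h : N+1 ≤ m) : fBe n N l m = 0 := if_neg (by omega)

theorem even_singular_vector_system_existence (n : ℕ) (hn : 2 ≤ n) (N : ℕ)
    (p : ℕ) (hp : p ≤ n - 1) (l : ℂ) :
    ∀ P Q R : Polynomial ℂ,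
      P = Polynomial.C (l + (p : ℂ) - 2 * (N : ℂ)) *
            ∑ j ∈ Finset.range (N + 1), Polynomial.C (aC n N j l) * Polynomial.X ^ j →
      Q = Polynomial.C (-(2 * (N : ℂ)) * (2 * l + (n : ℂ) - 2 * (N : ℂ) - 1)) *
            ∑ j ∈ Finset.range N, Polynomial.C (bC n (N - 1) j (l - 1)) * Polynomial.X ^ j →
      R = Polynomial.C (2 * (N : ℂ)) *
            ∑ j ∈ Finset.range N, Polynomial.C (aC n (N - 1) j (l - 1)) * Polynomial.X ^ j →
      (C 2 * X * (X + 1) * derivative (derivative P) + C (3 - 4 * (N : ℂ)) * X * derivative P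
          + C (2 * l + (n : ℂ) - 4 * (N : ℂ) + 1) * derivative P
          + C ((N : ℂ) * (2 * (N : ℂ) - 1)) * P = 0) ∧
      (C 2 * derivative P + C (2 * (N : ℂ) - 1) * Q - C 2 * X * derivative Q
          + C 2 * X * derivative R + C (l + (n : ℂ) - (p : ℂ) - 2 * (N : ℂ) + 1) * R = 0) ∧
      (-(C 2 * derivative P) + C (l + (p : ℂ) - 2 * (N : ℂ)) * R = 0) ∧
      (C 2 * X * derivative P - C (2 * (N : ℂ)) * P
          + C (l + (p : ℂ) - 2 * (N : ℂ)) * Q = 0) ∧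
      (C 2 * X * (X + 1) * derivative (derivative Q) + C (5 - 4 * (N : ℂ)) * X * derivative Q
          + C (2 * l + (n : ℂ) - 4 * (N : ℂ) + 3) * derivative Q
          + C (((N : ℂ) - 1) * (2 * (N : ℂ) - 1)) * Q
          + C 2 * X * derivative R - C (2 * (N : ℂ) - 2) * R = 0) ∧
      (C 2 * X * (X + 1) * derivative (derivative R) + C (7 - 4 * (N : ℂ)) * X * derivative R
          + C (2 * l + (n : ℂ) - 4 * (N : ℂ) + 3) * derivative R
          + C (((N : ℂ) - 1) * (2 * (N : ℂ) - 3)) * R = 0) := by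
  intro P Q R hP hQ hR
  subst hP hQ hR
  rcases N with _ | M
  · refine ⟨?_, ?_, ?_, ?_, ?_, ?_⟩ <;>
      simp [Finset.sum_range_one, derivative_C_mul]
  · simp only [Nat.add_sub_cancel]
    have eA : (∑ j ∈ Finset.range (M+1+1), C (aC n (M+1) j l) * X ^ j)
        = ∑ j ∈ Finset.range (M+2), C (fAe n (M+1) l j) * X ^ j :=
      Finset.sum_congr rfl (fun j hj => by
        rw [fAe_lt n (M+1) l j (Finset.mem_range.mp hj)])
    have eB : (∑ j ∈ Finset.range (M+1), C (bC n M j (l-1)) * X ^ j)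
        = ∑ j ∈ Finset.range (M+1), C (fBe n M (l-1) j) * X ^ j :=
      Finset.sum_congr rfl (fun j hj => by
        rw [fBe_lt n M (l-1) j (Finset.mem_range.mp hj)])
    have eR : (∑ j ∈ Finset.range (M+1), C (aC n M j (l-1)) * X ^ j)
        = ∑ j ∈ Finset.range (M+1), C (fAe n M (l-1) j) * X ^ j :=
      Finset.sum_congr rfl (fun j hj => by
        rw [fAe_lt n M (l-1) j (Finset.mem_range.mp hj)])
    rw [eA, eB, eR]
    have hrec1 : ∀ m : ℕ, ((m:ℂ)+1)*(2*(m:ℂ)+(2*l + (n:ℂ) - 4*((M+1:ℕ):ℂ) + 1)) * fAe n (M+1) l (m+1)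
        + (2*(m:ℂ)^2+((3 - 4*((M+1:ℕ):ℂ))-2)*(m:ℂ)+((M+1:ℕ):ℂ)*(2*((M+1:ℕ):ℂ)-1)) * fAe n (M+1) l m = 0 := by
      intro m
      rcases lt_trichotomy m (M+1) with hm | hm | hm
      · rw [fAe_lt n (M+1) l (m+1) (by omega), fAe_lt n (M+1) l m (by omega)]
        have h := Lev n (M+1) m hm l
        push_cast at h ⊢
        linear_combination h
      · subst hm
        rw [fAe_ge n (M+1) l ((M+1)+1) (by omega), fAe_lt n (M+1) l (M+1) (by omega)]
        push_cast; ring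
      · rw [fAe_ge n (M+1) l (m+1) (by omega), fAe_ge n (M+1) l m (by omega)]
        ring
    have h1 := ode_of_rec (M+2) (fAe n (M+1) l) (3 - 4*((M+1:ℕ):ℂ))
      (2*l + (n:ℂ) - 4*((M+1:ℕ):ℂ) + 1) (((M+1:ℕ):ℂ)*(2*((M+1:ℕ):ℂ)-1))
      (fun m hm => fAe_ge n (M+1) l m (by omega)) hrec1
    have hrec6 : ∀ m : ℕ, ((m:ℂ)+1)*(2*(m:ℂ)+(2*l + (n:ℂ) - 4*((M+1:ℕ):ℂ) + 3)) * fAe n M (l-1) (m+1)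
        + (2*(m:ℂ)^2+((7 - 4*((M+1:ℕ):ℂ))-2)*(m:ℂ)+(((M+1:ℕ):ℂ)-1)*(2*((M+1:ℕ):ℂ)-3)) * fAe n M (l-1) m = 0 := by
      intro m
      rcases lt_trichotomy m M with hm | hm | hm
      · rw [fAe_lt n M (l-1) (m+1) (by omega), fAe_lt n M (l-1) m (by omega)]
        have h := Lev n M m hm (l-1)
        push_cast at h ⊢
        linear_combination h
      · rw [fAe_ge n M (l-1) (m+1) (by omega), fAe_lt n M (l-1) m (by omega), hm]
        push_cast; ring
      · rw [fAe_ge n M (l-1) (m+1) (by omega), fAe_ge n M (l-1) m (by omega)]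
        ring
    have h6 := ode_of_rec (M+1) (fAe n M (l-1)) (7 - 4*((M+1:ℕ):ℂ))
      (2*l + (n:ℂ) - 4*((M+1:ℕ):ℂ) + 3) ((((M+1:ℕ):ℂ)-1)*(2*((M+1:ℕ):ℂ)-3))
      (fun m hm => fAe_ge n M (l-1) m (by omega)) hrec6
    have hrec5 : ∀ m : ℕ, ((m:ℂ)+1)*(2*(m:ℂ)+(2*l + (n:ℂ) - 4*((M+1:ℕ):ℂ) + 1)) * fBe n M (l-1) (m+1)
        + (2*(m:ℂ)^2+((5 - 4*((M+1:ℕ):ℂ))-2)*(m:ℂ)+(((M+1:ℕ):ℂ)-1)*(2*((M+1:ℕ):ℂ)-1)) * fBe n M (l-1) m = 0 := by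
      intro m
      rcases lt_trichotomy m M with hm | hm | hm
      · rw [fBe_lt n M (l-1) (m+1) (by omega), fBe_lt n M (l-1) m (by omega)]
        have h := Lodd n M m hm (l-1)
        push_cast at h ⊢
        linear_combination h
      · rw [fBe_ge n M (l-1) (m+1) (by omega), fBe_lt n M (l-1) m (by omega), hm]
        push_cast; ring
      · rw [fBe_ge n M (l-1) (m+1) (by omega), fBe_ge n M (l-1) m (by omega)]
        ring
    have h5 := ode_of_rec (M+1) (fBe n M (l-1)) (5 - 4*((M+1:ℕ):ℂ))
      (2*l + (n:ℂ) - 4*((M+1:ℕ):ℂ) + 1) ((((M+1:ℕ):ℂ)-1)*(2*((M+1:ℕ):ℂ)-1))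
      (fun m hm => fBe_ge n M (l-1) m (by omega)) hrec5
    have hrec3 : ∀ m : ℕ, (-2:ℂ)*((m:ℂ)+1)*fAe n (M+1) l (m+1) + ((0:ℂ)*(m:ℂ) + 0)*fAe n (M+1) l m
        + (0:ℂ)*((m:ℂ)+1)*fAe n M (l-1) (m+1) + ((0:ℂ)*(m:ℂ)+2*((M+1:ℕ):ℂ))*fAe n M (l-1) m = 0 := by
      intro m
      by_cases hm : m < M+1
      · rw [fAe_lt n (M+1) l (m+1) (by omega), fAe_lt n M (l-1) m (by omega)]
        have h := L3 n M m (by omega) l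
        push_cast at h ⊢
        linear_combination (-2:ℂ) * h
      · rw [fAe_ge n (M+1) l (m+1) (by omega), fAe_ge n M (l-1) m (by omega)]
        ring
    have h3 := fo (M+2) (M+1) (fAe n (M+1) l) (fAe n M (l-1)) (-2) 0 0 0 0 (2*((M+1:ℕ):ℂ))
      (fun m hm => fAe_ge n (M+1) l m (by omega)) (fun m hm => fAe_ge n M (l-1) m (by omega)) hrec3
    have hrec4 : ∀ m : ℕ, (0:ℂ)*((m:ℂ)+1)*fAe n (M+1) l (m+1)
        + ((2:ℂ)*(m:ℂ) + -(2*((M+1:ℕ):ℂ)))*fAe n (M+1) l m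
        + (0:ℂ)*((m:ℂ)+1)*fBe n M (l-1) (m+1)
        + ((0:ℂ)*(m:ℂ)+(-(2*((M+1:ℕ):ℂ)) * (2*l + (n:ℂ) - 2*((M+1:ℕ):ℂ) - 1)))*fBe n M (l-1) m = 0 := by
      intro m
      rcases lt_trichotomy m (M+1) with hm | hm | hm
      · rw [fAe_lt n (M+1) l m (by omega), fBe_lt n M (l-1) m (by omega)]
        have h := L4 n M m (by omega) l
        push_cast at h ⊢
        linear_combination (2:ℂ) * h
      · subst hm
        rw [fAe_lt n (M+1) l (M+1) (by omega), fBe_ge n M (l-1) (M+1) (by omega)]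
        push_cast; ring
      · rw [fAe_ge n (M+1) l m (by omega), fBe_ge n M (l-1) m (by omega)]
        ring
    have h4 := fo (M+2) (M+1) (fAe n (M+1) l) (fBe n M (l-1)) 0 2 (-(2*((M+1:ℕ):ℂ))) 0 0
      (-(2*((M+1:ℕ):ℂ)) * (2*l + (n:ℂ) - 2*((M+1:ℕ):ℂ) - 1))
      (fun m hm => fAe_ge n (M+1) l m (by omega)) (fun m hm => fBe_ge n M (l-1) m (by omega)) hrec4
    have hrec2 : ∀ m : ℕ, (0:ℂ)*((m:ℂ)+1)*fBe n M (l-1) (m+1)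
        + ((-2*(-(2*((M+1:ℕ):ℂ)) * (2*l + (n:ℂ) - 2*((M+1:ℕ):ℂ) - 1)))*(m:ℂ)
            + (2*((M+1:ℕ):ℂ)-1)*(-(2*((M+1:ℕ):ℂ)) * (2*l + (n:ℂ) - 2*((M+1:ℕ):ℂ) - 1)))*fBe n M (l-1) m
        + (0:ℂ)*((m:ℂ)+1)*fAe n M (l-1) (m+1)
        + ((2*(2*((M+1:ℕ):ℂ)))*(m:ℂ)+(2*l + (n:ℂ) - 4*((M+1:ℕ):ℂ) + 1)*(2*((M+1:ℕ):ℂ)))*fAe n M (l-1) m = 0 := by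
      intro m
      by_cases hm : m < M+1
      · rw [fBe_lt n M (l-1) m (by omega), fAe_lt n M (l-1) m (by omega)]
        have h := L2 n M m (by omega) (l-1)
        push_cast at h ⊢
        linear_combination (2*((M:ℂ)+1)) * h
      · rw [fBe_ge n M (l-1) m (by omega), fAe_ge n M (l-1) m (by omega)]
        ring
    have h2 := fo (M+1) (M+1) (fBe n M (l-1)) (fAe n M (l-1)) 0
      (-2*(-(2*((M+1:ℕ):ℂ)) * (2*l + (n:ℂ) - 2*((M+1:ℕ):ℂ) - 1)))
      ((2*((M+1:ℕ):ℂ)-1)*(-(2*((M+1:ℕ):ℂ)) * (2*l + (n:ℂ) - 2*((M+1:ℕ):ℂ) - 1)))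
      0 (2*(2*((M+1:ℕ):ℂ))) ((2*l + (n:ℂ) - 4*((M+1:ℕ):ℂ) + 1)*(2*((M+1:ℕ):ℂ)))
      (fun m hm => fBe_ge n M (l-1) m (by omega)) (fun m hm => fAe_ge n M (l-1) m (by omega)) hrec2
    have hrecEX : ∀ m : ℕ, (2*(-(2*((M+1:ℕ):ℂ)) * (2*l + (n:ℂ) - 2*((M+1:ℕ):ℂ) - 1)))*((m:ℂ)+1)*fBe n M (l-1) (m+1)
        + ((0:ℂ)*(m:ℂ) + 0)*fBe n M (l-1) m
        + (0:ℂ)*((m:ℂ)+1)*fAe n M (l-1) (m+1)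
        + ((2*(2*((M+1:ℕ):ℂ)))*(m:ℂ)+(2-2*((M+1:ℕ):ℂ))*(2*((M+1:ℕ):ℂ)))*fAe n M (l-1) m = 0 := by
      intro m
      rcases lt_trichotomy m M with hm | hm | hm
      · rw [fBe_lt n M (l-1) (m+1) (by omega), fAe_lt n M (l-1) m (by omega)]
        have h := L5 n M m hm (l-1)
        push_cast at h ⊢
        linear_combination (-4*((M:ℂ)+1)) * h
      · rw [fBe_ge n M (l-1) (m+1) (by omega), fAe_lt n M (l-1) m (by omega), hm]
        push_cast; ring
      · rw [fBe_ge n M (l-1) (m+1) (by omega), fAe_ge n M (l-1) m (by omega)]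
        ring
    have hEX := fo (M+1) (M+1) (fBe n M (l-1)) (fAe n M (l-1))
      (2*(-(2*((M+1:ℕ):ℂ)) * (2*l + (n:ℂ) - 2*((M+1:ℕ):ℂ) - 1))) 0 0
      0 (2*(2*((M+1:ℕ):ℂ))) ((2-2*((M+1:ℕ):ℂ))*(2*((M+1:ℕ):ℂ)))
      (fun m hm => fBe_ge n M (l-1) m (by omega)) (fun m hm => fAe_ge n M (l-1) m (by omega)) hrecEX
    simp only [derivative_C_mul]
    simp only [map_neg, map_add, map_sub, map_mul, map_one, map_ofNat, map_natCast,
      Polynomial.C_0, Polynomial.C_1, zero_mul, mul_zero, add_zero, zero_add, neg_zero] at h1 h2 h3 h4 h5 h6 hEX ⊢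
    refine ⟨?_, ?_, ?_, ?_, ?_, ?_⟩
    · linear_combination (C l + ((p:ℕ):ℂ[X]) - 2*(((M+1:ℕ):ℕ):ℂ[X])) * h1
    · linear_combination h2 - (C l + ((p:ℕ):ℂ[X]) - 2*(((M+1:ℕ):ℕ):ℂ[X])) * h3
    · linear_combination (C l + ((p:ℕ):ℂ[X]) - 2*(((M+1:ℕ):ℕ):ℂ[X])) * h3
    · linear_combination (C l + ((p:ℕ):ℂ[X]) - 2*(((M+1:ℕ):ℕ):ℂ[X])) * h4
    · linear_combination (-(2*(((M+1:ℕ):ℕ):ℂ[X])) * (2*(C l) + ((n:ℕ):ℂ[X]) - 2*(((M+1:ℕ):ℕ):ℂ[X]) - 1)) * h5 + hEX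
    · linear_combination (2*(((M+1:ℕ):ℕ):ℂ[X])) * h6
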